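/- Let A be a loxodromic (or parabolic) element of PSL(2,C) acting on the ball model of hyperbolic 3-space with center O. If d_H(O, A·O) > R, then the Euclidean distance between A·O and the attracting fixed point A^+ of A (respectively the unique fixed point if A is parabolic) is at most C·e^{-R/2} for a universal constant C. -/

import Mathlib

open Filter Set
open scoped ENNReal

noncomputable section

abbrev E3 := EuclideanSpace ℝ (Fin 3)

/-- The open unit ball: the Poincaré ball model of hyperbolic 3-space. -/
def ball3 : Set E3 := Metric.ball 0 1

/-- Hyperbolic distance in the Poincaré ball model. -/
def hDist (x y : E3) : ℝ :=
  2 * Real.arsinh (dist x y / Real.sqrt ((1 - ‖x‖ ^ 2) * (1 - ‖y‖ ^ 2)))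

/-- The hyperbolic geodesic segment between `x` and `y`: points of the ball lying
between them with respect to the hyperbolic metric. -/
def hSeg (x y : E3) : Set E3 :=
  {z | z ∈ ball3 ∧ hDist x z + hDist z y = hDist x y}

/-- A horoball in the ball model: a closed Euclidean ball internally tangent to the
unit sphere. -/
def Horoball (H : Set E3) : Prop :=
  ∃ c : E3, ∃ r : ℝ, 0 < r ∧ ‖c‖ = 1 - r ∧ H = Metric.closedBall c r

/-- A (complete) geodesic line in the ball model. -/
def IsGeodesicLine (L : Set E3) : Prop :=
  ∃ γ : ℝ → E3, (∀ t, γ t ∈ ball3) ∧ (∀ s t, hDist (γ s) (γ t) = |s - t|) ∧ L = Set.range γ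

/-- Hyperbolic distance from a point to a set. -/
def hDistToSet (x : E3) (L : Set E3) : ℝ := sInf ((hDist x) '' L)

/-- The equidistant tube of radius `R` about a geodesic line `L`. -/
def tube (L : Set E3) (R : ℝ) : Set E3 := {x ∈ ball3 | hDistToSet x L ≤ R}

/-- The boundary of the equidistant tube of radius `R` about `L`. -/
def tubeBoundary (L : Set E3) (R : ℝ) : Set E3 := {x ∈ ball3 | hDistToSet x L = R}

/-- A thin component: a horoball or an equidistant tube (of radius at least `R₀`). -/
def ThinR (R₀ : ℝ) (T : Set E3) : Prop :=
  Horoball T ∨ ∃ L R, IsGeodesicLine L ∧ R₀ ≤ R ∧ T = tube L R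

/-- Length of a path `γ` on `[a,b]`, measured with respect to a distance function `d`,
as the supremum of the `d`-lengths of inscribed polygonal approximations. -/
def pathELength {α : Type*} (d : α → α → ℝ) (γ : ℝ → α) (a b : ℝ) : ℝ≥0∞ :=
  ⨆ p : {q : ℕ × (ℕ → ℝ) // Monotone q.2 ∧ q.2 0 = a ∧ q.2 q.1 = b ∧
      ∀ i, q.2 i ∈ Set.Icc a b},
    ∑ i ∈ Finset.range p.1.1, ENNReal.ofReal (d (γ (p.1.2 i)) (γ (p.1.2 (i + 1))))

/-- The intrinsic (induced path) distance between `x` and `y` inside the set `S`,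
with respect to the distance function `d`. -/
def intrinsicDist {α : Type*} [TopologicalSpace α] (d : α → α → ℝ) (S : Set α)
    (x y : α) : ℝ≥0∞ :=
  ⨅ γ : {γ : ℝ → α // ContinuousOn γ (Set.Icc 0 1) ∧ γ 0 = x ∧ γ 1 = y ∧
      ∀ t ∈ Set.Icc (0 : ℝ) 1, γ t ∈ S},
    pathELength d γ.1 0 1

/-- A bijective self-map of the ball preserving the hyperbolic metric. -/
def IsHIsom (A : E3 → E3) : Prop :=
  Set.BijOn A ball3 ball3 ∧ ∀ x ∈ ball3, ∀ y ∈ ball3, hDist (A x) (A y) = hDist x y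

/-- An action of a group by hyperbolic isometries of the ball model. -/
def IsIsomAction {Γ : Type*} [Group Γ] (ρ : Γ → E3 → E3) : Prop :=
  (∀ g, IsHIsom (ρ g)) ∧ (∀ x, ρ 1 x = x) ∧ ∀ g h x, ρ (g * h) x = ρ g (ρ h x)

/-- Word length with respect to a (symmetrized) generating set `S`. -/
def wordLength {Γ : Type*} [Group Γ] (S : Set Γ) (g : Γ) : ℕ :=
  sInf {n | ∃ l : List Γ, l.length = n ∧ (∀ x ∈ l, x ∈ S ∨ x⁻¹ ∈ S) ∧ l.prod = g}

/-- The limit set: accumulation points on the sphere at infinity of the orbit of `O`. -/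
def limitSet {Γ : Type*} [Group Γ] (ρ : Γ → E3 → E3) (O : E3) : Set E3 :=
  {ξ | ‖ξ‖ = 1 ∧ ∃ u : ℕ → Γ, Tendsto (fun n => ρ (u n) O) atTop (nhds ξ)}

/-- Hyperbolic convexity. -/
def hConvex (C : Set E3) : Prop := ∀ x ∈ C, ∀ y ∈ C, hSeg x y ⊆ C

/-- The hyperbolic convex hull (in the ball) of a subset `Λ` of the sphere at infinity. -/
def limitHull (Λ : Set E3) : Set E3 :=
  (⋂₀ {C | C ⊆ ball3 ∧ hConvex C ∧ Λ ⊆ closure C}) ∩ ball3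

/-- Convex cocompactness: the orbit of `O` is cobounded in the convex hull of the
limit set (i.e. the quotient of the convex core is compact). -/
def ConvexCocompact {Γ : Type*} [Group Γ] (ρ : Γ → E3 → E3) (O : E3) : Prop :=
  ∃ D : ℝ, ∀ x ∈ limitHull (limitSet ρ O), ∃ g : Γ, hDist x (ρ g O) ≤ D

/-- `g` acts as a parabolic isometry: no fixed point in the ball, and zero
infimal displacement. -/
def IsParabolicIsom (A : E3 → E3) : Prop :=
  (∀ x ∈ ball3, A x ≠ x) ∧ sInf {d | ∃ x ∈ ball3, d = hDist x (A x)} = 0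

/-- Geometric finiteness, phrased via a Γ-invariant family of disjoint horoballs whose
complement in the convex core is cobounded for the orbit of `O`. -/
def GeomFiniteBall {Γ : Type*} [Group Γ] (ρ : Γ → E3 → E3) (O : E3) : Prop :=
  ∃ 𝓗 : Set (Set E3),
    (∀ H ∈ 𝓗, Horoball H) ∧
    (∀ H ∈ 𝓗, ∀ H' ∈ 𝓗, H ≠ H' → Disjoint H H') ∧
    (∀ g : Γ, ∀ H ∈ 𝓗, (ρ g) '' H ∈ 𝓗) ∧
    ∃ D : ℝ, ∀ x ∈ limitHull (limitSet ρ O) \ ⋃₀ 𝓗, ∃ g : Γ, hDist x (ρ g O) ≤ D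



/-- Auxiliary: `hDist` from the origin in terms of the norm. -/
lemma hDist_zero_eq (x : E3) :
    hDist 0 x = 2 * Real.arsinh (‖x‖ / Real.sqrt (1 - ‖x‖ ^ 2)) := by
  simp [hDist]

lemma mem_ball3_iff {x : E3} : x ∈ ball3 ↔ ‖x‖ < 1 := by
  simp [ball3, mem_ball_zero_iff]

lemma exp_neg_half_hDist_zero (x : E3) (hx : ‖x‖ < 1) :
    Real.exp (-(hDist 0 x) / 2) = (1 - ‖x‖) / Real.sqrt (1 - ‖x‖ ^ 2) := by
  have hr0 : 0 ≤ ‖x‖ := norm_nonneg _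
  have h1r : (0:ℝ) < 1 - ‖x‖ ^ 2 := by nlinarith
  set r := ‖x‖
  set p := Real.sqrt (1 - r ^ 2) with hp
  have hp0 : 0 < p := Real.sqrt_pos.2 h1r
  have hp2 : p ^ 2 = 1 - r ^ 2 := Real.sq_sqrt h1r.le
  rw [hDist_zero_eq]
  have h1 : -(2 * Real.arsinh (r / p)) / 2 = Real.arsinh (-(r / p)) := by
    rw [Real.arsinh_neg]; ring
  rw [h1, Real.exp_arsinh]
  have h2 : 1 + (-(r / p)) ^ 2 = (1 / p) ^ 2 := by
    field_simp
    nlinarith [hp2]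
  rw [h2, Real.sqrt_sq (by positivity)]
  field_simp
  nlinarith [hp2]

/-- The Gromov-product estimate: Euclidean distance is at most
`4 · exp(−(x|y)_O)` in the ball model. -/
lemma dist_le_exp_gromov (x y : E3) (hx : ‖x‖ < 1) (hy : ‖y‖ < 1) :
    dist x y ≤ 4 * Real.exp ((hDist x y - hDist 0 x - hDist 0 y) / 2) := by
  have hr0 : 0 ≤ ‖x‖ := norm_nonneg _
  have hs0 : 0 ≤ ‖y‖ := norm_nonneg _
  have ht0 : 0 ≤ dist x y := dist_nonneg
  have h1r : (0:ℝ) < 1 - ‖x‖ ^ 2 := by nlinarith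
  have h1s : (0:ℝ) < 1 - ‖y‖ ^ 2 := by nlinarith
  set r := ‖x‖
  set s := ‖y‖
  set t := dist x y
  set p := Real.sqrt (1 - r ^ 2) with hp
  set q := Real.sqrt (1 - s ^ 2) with hq
  have hp0 : 0 < p := Real.sqrt_pos.2 h1r
  have hq0 : 0 < q := Real.sqrt_pos.2 h1s
  have hp2 : p ^ 2 = 1 - r ^ 2 := Real.sq_sqrt h1r.le
  have hq2 : q ^ 2 = 1 - s ^ 2 := Real.sq_sqrt h1s.le
  have hpq : Real.sqrt ((1 - r ^ 2) * (1 - s ^ 2)) = p * q := Real.sqrt_mul h1r.le _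
  set E := Real.exp (hDist x y / 2) with hE
  have hE0 : 0 < E := Real.exp_pos _
  have hsinh : Real.sinh (hDist x y / 2) = t / (p * q) := by
    have h : hDist x y / 2 = Real.arsinh (t / (p * q)) := by
      rw [hDist, hpq]; ring
    rw [h, Real.sinh_arsinh]
  have hexp_ge : t / (p * q) ≤ E := by
    rw [← hsinh, Real.sinh_eq, hE]
    nlinarith [Real.exp_pos (hDist x y / 2), Real.exp_pos (-(hDist x y / 2))]
  have hEt : t ≤ E * (p * q) := (div_le_iff₀ (by positivity)).1 hexp_ge
  have hsplit : Real.exp ((hDist x y - hDist 0 x - hDist 0 y) / 2)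
      = E * Real.exp (-(hDist 0 x) / 2) * Real.exp (-(hDist 0 y) / 2) := by
    rw [hE, ← Real.exp_add, ← Real.exp_add]; ring_nf
  rw [hsplit, exp_neg_half_hDist_zero x hx, exp_neg_half_hDist_zero y hy]
  have e1 : 4 * (E * ((1 - r) / p) * ((1 - s) / q)) = 4 * E * (1 - r) * (1 - s) / (p * q) := by
    field_simp
  rw [e1, le_div_iff₀ (by positivity)]
  have h3 : t * (p * q) ≤ E * (p * q) * (p * q) :=
    mul_le_mul_of_nonneg_right hEt (by positivity)
  have h4 : E * (p * q) * (p * q) = E * ((1 - r ^ 2) * (1 - s ^ 2)) := by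
    rw [show E * (p * q) * (p * q) = E * (p ^ 2 * q ^ 2) by ring, hp2, hq2]
  have h3rs : (0:ℝ) ≤ 3 - r - s - r * s := by nlinarith
  have hint : 0 ≤ E * (1 - r) * (1 - s) * (3 - r - s - r * s) :=
    mul_nonneg (mul_nonneg (mul_nonneg hE0.le (by linarith : (0:ℝ) ≤ 1 - r))
      (by linarith : (0:ℝ) ≤ 1 - s)) h3rs
  nlinarith [h3, h4, hint]

lemma norm_sq_le_of_hDist_zero_le {x : E3} (hx : ‖x‖ < 1) {M : ℝ}
    (h : hDist 0 x ≤ M) :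
    ‖x‖ ^ 2 * (1 + Real.sinh (M / 2) ^ 2) ≤ Real.sinh (M / 2) ^ 2 := by
  have hr0 : 0 ≤ ‖x‖ := norm_nonneg _
  have h1r : (0:ℝ) < 1 - ‖x‖ ^ 2 := by nlinarith
  set r := ‖x‖
  set p := Real.sqrt (1 - r ^ 2) with hp
  have hp0 : 0 < p := Real.sqrt_pos.2 h1r
  have hp2 : p ^ 2 = 1 - r ^ 2 := Real.sq_sqrt h1r.le
  rw [hDist_zero_eq] at h
  have h1 : Real.arsinh (r / p) ≤ M / 2 := by linarith
  have h2 : r / p ≤ Real.sinh (M / 2) := by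
    have := Real.sinh_le_sinh.2 h1
    rwa [Real.sinh_arsinh] at this
  have h3 : r ≤ Real.sinh (M / 2) * p := (div_le_iff₀ hp0).1 h2
  nlinarith [h3, hr0, hp2, hp0.le]

/-- If `A` is a loxodromic or parabolic isometry of the ball model with
attracting fixed point (resp. unique fixed point) `ξ` on the boundary sphere, and
`d_H(O, A·O) > R`, then `d_E(A·O, ξ) ≤ C·e^{-R/2}` for a universal constant `C`.
The attracting/unique fixed point is characterized by the convergence of all forward
orbits to `ξ`. -/
theorem stmt1 :
    ∃ C : ℝ, 0 < C ∧ ∀ (A : E3 → E3) (ξ : E3) (R : ℝ),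
      IsHIsom A → ‖ξ‖ = 1 →
      (∀ x ∈ ball3, Tendsto (fun n => A^[n] x) atTop (nhds ξ)) →
      R < hDist 0 (A 0) →
      dist (A 0) ξ ≤ C * Real.exp (-R / 2) := by
  refine ⟨4, by norm_num, ?_⟩
  intro A ξ R hA hξ hconv hR
  have h0 : (0:E3) ∈ ball3 := mem_ball3_iff.2 (by simp)
  have hmem : ∀ n, A^[n] (0:E3) ∈ ball3 := by
    intro n
    induction n with
    | zero => simpa using h0
    | succ n ih => rw [Function.iterate_succ_apply']; exact hA.1.mapsTo ih
  set d : ℕ → ℝ := fun n => hDist 0 (A^[n] 0) with hd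
  have hA0 : A 0 ∈ ball3 := by simpa using hmem 1
  have hd1 : hDist 0 (A 0) = d 1 := by simp [hd]
  have hiso : ∀ n, hDist (A 0) (A^[n + 1] 0) = d n := by
    intro n
    rw [Function.iterate_succ_apply']
    exact hA.2 0 h0 _ (hmem n)
  have htend : Tendsto (fun n => A^[n] (0:E3)) atTop (nhds ξ) := hconv 0 h0
  have hnorm2 : Tendsto (fun n => ‖A^[n] (0:E3)‖ ^ 2) atTop (nhds 1) := by
    have h1 : Tendsto (fun n => ‖A^[n] (0:E3)‖) atTop (nhds 1) := by
      have := (continuous_norm.tendsto ξ).comp htend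
      rwa [hξ] at this
    simpa using h1.pow 2
  have hfreq : ∃ᶠ n in atTop, d n ≤ d (n + 1) := by
    by_contra hcon
    rw [Filter.not_frequently] at hcon
    simp only [not_le] at hcon
    obtain ⟨N, hN⟩ := Filter.eventually_atTop.1 hcon
    have hbdd : ∀ n, N ≤ n → d n ≤ d N := by
      intro n hn
      induction n, hn using Nat.le_induction with
      | base => exact le_refl _
      | succ n hn ih => exact (hN n hn).le.trans ih
    set s0 := Real.sinh (d N / 2) with hs0
    have hup : ∀ n, N ≤ n → ‖A^[n] (0:E3)‖ ^ 2 * (1 + s0 ^ 2) ≤ s0 ^ 2 := fun n hn =>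
      norm_sq_le_of_hDist_zero_le (mem_ball3_iff.1 (hmem n)) (hbdd n hn)
    have hlim : Tendsto (fun n => ‖A^[n] (0:E3)‖ ^ 2 * (1 + s0 ^ 2)) atTop
        (nhds (1 + s0 ^ 2)) := by
      simpa using hnorm2.mul_const (1 + s0 ^ 2)
    have hev := hlim.eventually_const_lt (show s0 ^ 2 < 1 + s0 ^ 2 by linarith)
    obtain ⟨m, hm1, hm2⟩ := (hev.and (eventually_ge_atTop N)).exists
    exact absurd (hup m hm2) (not_le.2 hm1)
  have hfb : ∃ᶠ n in atTop, dist (A 0) (A^[n + 1] 0) ≤ 4 * Real.exp (-R / 2) := by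
    refine hfreq.mono fun n hn => ?_
    have hk := dist_le_exp_gromov (A 0) (A^[n + 1] 0) (mem_ball3_iff.1 hA0)
      (mem_ball3_iff.1 (hmem (n + 1)))
    refine hk.trans ?_
    have harg : (hDist (A 0) (A^[n + 1] 0) - hDist 0 (A 0) - hDist 0 (A^[n + 1] 0)) / 2
        ≤ -R / 2 := by
      rw [hiso n, hd1]
      have hdn1 : hDist 0 (A^[n + 1] 0) = d (n + 1) := rfl
      rw [hdn1]
      have hR' : R < d 1 := by rwa [hd1] at hR
      linarith
    have := Real.exp_le_exp.2 harg
    linarith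
  by_contra hlt
  push_neg at hlt
  have htd : Tendsto (fun n => dist (A 0) (A^[n] (0:E3))) atTop (nhds (dist (A 0) ξ)) :=
    tendsto_const_nhds.dist htend
  have hev := htd.eventually_const_lt hlt
  rw [eventually_atTop] at hev
  obtain ⟨N, hN⟩ := hev
  obtain ⟨n, hb, hn⟩ := (hfb.and_eventually (eventually_ge_atTop N)).exists
  have := hN (n + 1) (hn.trans (Nat.le_succ n))
  linarith


end
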